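/- Let L be a finite lattice and let j ⋘m C₀ ⊔ C₁ be a minimal join-cover of the join-irreducible j, partitioned into disjoint subsets C₀ and C₁. Suppose X is a finite set of join-irreducible elements with ⋁X ≤ ⋁C₀ and j ≤ ⋁X ∨ ⋁C₁. Then there exists a minimal join-cover of j of the form j ⋘m D₀ ⊔ C₁ where every element of D₀ is below some element of X. -/

import Mathlib

variable {L : Type*} [Lattice L] [OrderBot L] [DecidableEq L]

def JoinIrred (j : L) : Prop := j ≠ ⊥ ∧ ∀ a b : L, j = a ⊔ b → j = a ∨ j = b

def Refines (X Y : Finset L) : Prop := ∀ x ∈ X, ∃ y ∈ Y, x ≤ y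

def MinJoinCover (j : L) (C : Finset L) : Prop :=
  (∀ c ∈ C, JoinIrred c) ∧ IsAntichain (· ≤ ·) (C : Set L) ∧ j ≤ C.sup id ∧
    ∀ D : Finset L, (∀ d ∈ D, JoinIrred d) → j ≤ D.sup id → Refines D C → C ⊆ D

/-- In a finite nonempty finset there is an element minimal for any
transitive irreflexive relation. -/
lemma exists_min_rel {α : Type*} (r : α → α → Prop) (htr : Transitive r)
    (hirr : ∀ a, ¬ r a a) :
    ∀ (n : ℕ) (s : Finset α), s.card ≤ n → s.Nonempty → ∃ m ∈ s, ∀ x ∈ s, ¬ r x m := by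
  classical
  intro n
  induction n with
  | zero => intro s hc hs; simp [Finset.card_eq_zero.mp (Nat.le_zero.mp hc)] at hs
  | succ n ih =>
    intro s hc hs
    obtain ⟨a, ha⟩ := hs
    set t := s.filter (fun x => r x a) with ht
    by_cases hte : t.Nonempty
    · have hat : a ∉ t := by simp [ht, hirr a]
      have hts : t ⊆ s := Finset.filter_subset _ _
      have : t.card ≤ n := by
        have h1 : t.card < s.card := Finset.card_lt_card ⟨hts, fun hsub => hat (hsub ha)⟩
        omega
      obtain ⟨m, hm, hmin⟩ := ih t this hte
      refine ⟨m, hts hm, fun x hx hrx => ?_⟩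
      have hma : r m a := (Finset.mem_filter.mp hm).2
      exact hmin x (Finset.mem_filter.mpr ⟨hx, htr hrx hma⟩) hrx
    · refine ⟨a, ha, fun x hx hrx => hte ⟨x, Finset.mem_filter.mpr ⟨hx, hrx⟩⟩⟩

/-- Every element of a finset is below a maximal element of it. -/
lemma exists_le_max {α : Type*} [PartialOrder α] (Y : Finset α) (y : α) (hy : y ∈ Y) :
    ∃ m ∈ Y, y ≤ m ∧ ∀ z ∈ Y, m ≤ z → m = z := by
  classical
  obtain ⟨m, hm, hmax'⟩ := Finset.exists_maximal (s := Y.filter (fun z => y ≤ z))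
    ⟨y, Finset.mem_filter.mpr ⟨hy, le_refl y⟩⟩
  have hmax : ∀ z ∈ Y.filter (fun z => y ≤ z), ¬ m < z := fun z hz hlt =>
    lt_irrefl m (lt_of_lt_of_le hlt (hmax' hz hlt.le))
  obtain ⟨hmY, hym⟩ := Finset.mem_filter.mp hm
  refine ⟨m, hmY, hym, fun z hz hmz => ?_⟩
  have hzf : z ∈ Y.filter (fun z => y ≤ z) := Finset.mem_filter.mpr ⟨hz, le_trans hym hmz⟩
  by_contra hne
  exact hmax z hzf (lt_of_le_of_ne hmz hne)

/-- The maximal elements of a finset form an antichain with the same sup bound. -/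
lemma exists_antichain_subset (D : Finset L) :
    ∃ M ⊆ D, IsAntichain (· ≤ ·) (M : Set L) ∧ D.sup id ≤ M.sup id := by
  classical
  refine ⟨D.filter (fun y => ∀ z ∈ D, y ≤ z → y = z), Finset.filter_subset _ _, ?_, ?_⟩
  · intro a ha b hb hab hle
    obtain ⟨haD, hamax⟩ := Finset.mem_filter.mp ha
    exact hab (hamax b (Finset.mem_filter.mp hb).1 hle)
  · refine Finset.sup_le fun y hy => ?_
    obtain ⟨m, hm, hym, hmax⟩ := exists_le_max D y hy
    exact le_trans hym (Finset.le_sup (f := id)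
      (Finset.mem_filter.mpr ⟨hm, fun z hz h => hmax z hz h⟩))

/-- Every join-cover of j by join-irreducibles refines to a minimal join-cover. -/
lemma exists_minJoinCover [Fintype L] (j : L) (Y : Finset L)
    (hY : ∀ y ∈ Y, JoinIrred y) (hjY : j ≤ Y.sup id) :
    ∃ E : Finset L, MinJoinCover j E ∧ Refines E Y := by
  classical
  set P : Finset L → Prop := fun A =>
    (∀ a ∈ A, JoinIrred a) ∧ IsAntichain (· ≤ ·) (A : Set L) ∧ j ≤ A.sup id ∧ Refines A Y
    with hP
  set S : Finset (Finset L) := Finset.univ.filter P with hS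
  have memS : ∀ A, A ∈ S ↔ P A := by
    intro A; simp [hS]
  -- S is nonempty: the maximal elements of Y
  have hSne : S.Nonempty := by
    obtain ⟨M, hMY, hMac, hMsup⟩ := exists_antichain_subset Y
    exact ⟨M, (memS M).mpr ⟨fun a ha => hY a (hMY ha), hMac, le_trans hjY hMsup,
      fun x hx => ⟨x, hMY hx, le_refl x⟩⟩⟩
  -- strict refinement relation
  set r : Finset L → Finset L → Prop := fun A B => Refines A B ∧ ¬ Refines B A with hr
  have htr : Transitive r := by
    rintro A B C ⟨hAB, hBA⟩ ⟨hBC, hCB⟩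
    refine ⟨fun a ha => ?_, fun hCA => ?_⟩
    · obtain ⟨b, hb, hab⟩ := hAB a ha
      obtain ⟨c, hc, hbc⟩ := hBC b hb
      exact ⟨c, hc, le_trans hab hbc⟩
    · exact hCB fun c hc => by
        obtain ⟨a, ha, hca⟩ := hCA c hc
        obtain ⟨b, hb, hab⟩ := hAB a ha
        exact ⟨b, hb, le_trans hca hab⟩
  have hirr : ∀ A, ¬ r A A := fun A ⟨h1, h2⟩ => h2 h1
  obtain ⟨E, hES, hEmin⟩ := exists_min_rel r htr hirr S.card S (le_refl _) hSne
  obtain ⟨hEji, hEac, hjE, hEY⟩ := (memS E).mp hES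
  refine ⟨E, ⟨hEji, hEac, hjE, ?_⟩, hEY⟩
  intro D hDji hjD hDE
  obtain ⟨M, hMD, hMac, hMsup⟩ := exists_antichain_subset D
  have hME : Refines M E := fun m hm => hDE m (hMD hm)
  have hMS : M ∈ S := (memS M).mpr ⟨fun a ha => hDji a (hMD ha), hMac,
    le_trans hjD hMsup, fun m hm => by
      obtain ⟨e, he, hme⟩ := hME m hm
      obtain ⟨y, hy, hey⟩ := hEY e he
      exact ⟨y, hy, le_trans hme hey⟩⟩
  have hEM : Refines E M := by
    by_contra h
    exact hEmin M hMS ⟨hME, h⟩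
  -- E ≪ M ≪ E with E, M antichains ⇒ E ⊆ M ⊆ D
  intro e he
  obtain ⟨m, hm, hem⟩ := hEM e he
  obtain ⟨e', he', hme'⟩ := hME m hm
  have hee' : e = e' := by
    by_contra hne
    exact hEac (by exact_mod_cast he) (by exact_mod_cast he') hne (le_trans hem hme')
  have : e = m := le_antisymm hem (hee' ▸ hme')
  exact hMD (this ▸ hm)

theorem stmt_14 [Fintype L]
    (j : L) (hj : JoinIrred j) (C₀ C₁ : Finset L) (hdisj : Disjoint C₀ C₁)
    (hmjc : MinJoinCover j (C₀ ∪ C₁))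
    (X : Finset L) (hX : ∀ x ∈ X, JoinIrred x)
    (hXC₀ : X.sup id ≤ C₀.sup id) (hjX : j ≤ X.sup id ⊔ C₁.sup id) :
    ∃ D₀ : Finset L, Disjoint D₀ C₁ ∧ MinJoinCover j (D₀ ∪ C₁) ∧ Refines D₀ X := by
  classical
  obtain ⟨hCji, hCac, hjC, hCmin⟩ := hmjc
  have hYji : ∀ y ∈ X ∪ C₁, JoinIrred y := by
    intro y hy
    rcases Finset.mem_union.mp hy with h | h
    · exact hX y h
    · exact hCji y (Finset.mem_union_right _ h)
  have hjY : j ≤ (X ∪ C₁).sup id := by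
    rw [Finset.sup_union]; exact hjX
  obtain ⟨E, ⟨hEji, hEac, hjE, hEmin⟩, hEY⟩ := exists_minJoinCover j (X ∪ C₁) hYji hjY
  -- C₁ ⊆ E
  set F : Finset L := E.filter (fun e => ∃ c ∈ C₁, e ≤ c) with hF
  have hC₁E : C₁ ⊆ E := by
    have hDji : ∀ d ∈ C₀ ∪ F, JoinIrred d := by
      intro d hd
      rcases Finset.mem_union.mp hd with h | h
      · exact hCji d (Finset.mem_union_left _ h)
      · exact hEji d (Finset.filter_subset _ _ h)
    have hjD : j ≤ (C₀ ∪ F).sup id := by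
      rw [Finset.sup_union]
      refine le_trans hjE (Finset.sup_le fun e he => ?_)
      obtain ⟨y, hy, hey⟩ := hEY e he
      rcases Finset.mem_union.mp hy with h | h
      · exact le_sup_of_le_left (le_trans (le_trans hey (Finset.le_sup (f := id) h)) hXC₀)
      · exact le_sup_of_le_right (Finset.le_sup (f := id)
          (Finset.mem_filter.mpr ⟨he, y, h, hey⟩))
    have hDref : Refines (C₀ ∪ F) (C₀ ∪ C₁) := by
      intro d hd
      rcases Finset.mem_union.mp hd with h | h
      · exact ⟨d, Finset.mem_union_left _ h, le_refl d⟩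
      · obtain ⟨c, hc, hdc⟩ := (Finset.mem_filter.mp h).2
        exact ⟨c, Finset.mem_union_right _ hc, hdc⟩
    have hsub := hCmin (C₀ ∪ F) hDji hjD hDref
    intro c hc
    rcases Finset.mem_union.mp (hsub (Finset.mem_union_right _ hc)) with h | h
    · exact absurd hc (Finset.disjoint_left.mp hdisj h)
    · exact Finset.filter_subset _ _ h
  refine ⟨E \ C₁, Finset.sdiff_disjoint, ?_, ?_⟩
  · rw [Finset.sdiff_union_of_subset hC₁E]
    exact ⟨hEji, hEac, hjE, hEmin⟩
  · intro e he
    obtain ⟨heE, heC₁⟩ := Finset.mem_sdiff.mp he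
    obtain ⟨y, hy, hey⟩ := hEY e heE
    rcases Finset.mem_union.mp hy with h | h
    · exact ⟨y, h, hey⟩
    · exfalso
      have hyE : y ∈ E := hC₁E h
      by_cases hne : e = y
      · exact heC₁ (hne ▸ h)
      · exact hEac (by exact_mod_cast heE) (by exact_mod_cast hyE) hne hey
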